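/- In the pseudo-Riemannian Lie algebra family, the components F_ijk = F(X_i,X_j,X_k) satisfy: F₁₂₄ = −F₂₁₄ = λ₁, F₂₁₃ = −F₁₂₃ = λ₂, F₄₂₃ = −F₃₂₄ = λ₃, F₃₁₄ = −F₄₁₃ = λ₄, all other components being determined by the symmetry F_ijk = F_ikj or equal to zero; moreover F satisfies the cyclic identity F(x,y,z) + F(y,z,x) + F(z,x,y) = 0 for all x, y, z ∈ 𝔤 (i.e., the manifold belongs to the class 𝒲₃). -/

import Mathlib

noncomputable section

/-- The signature `(2,2)` of the pseudo-Riemannian metric: `ε = (1, 1, −1, −1)`. -/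
def eps : Fin 4 → ℝ := ![1, 1, -1, -1]

/-- The pseudo-Riemannian metric of signature `(2,2)` with
`g(X₁,X₁) = g(X₂,X₂) = 1`, `g(X₃,X₃) = g(X₄,X₄) = −1` and `g(Xᵢ,Xⱼ) = 0` for `i ≠ j`. -/
def gP {L : Type*} [AddCommGroup L] [Module ℝ L] (b : Module.Basis (Fin 4) ℝ L) (x y : L) : ℝ :=
  ∑ i, eps i * (b.repr x i * b.repr y i)

/-- The almost product structure `P` with `PX₁ = X₁`, `PX₂ = X₂`, `PX₃ = −X₃`, `PX₄ = −X₄`. -/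
def PP {L : Type*} [AddCommGroup L] [Module ℝ L] (b : Module.Basis (Fin 4) ℝ L) : L →ₗ[ℝ] L :=
  b.constr ℝ ![b 0, b 1, -b 2, -b 3]

/-- `(∇ₓP)y = (1/2)([x,Py] − P[x,y])`. -/
def nablaPP {L : Type*} [LieRing L] [LieAlgebra ℝ L] (b : Module.Basis (Fin 4) ℝ L) (x y : L) : L :=
  (2⁻¹ : ℝ) • (⁅x, PP b y⁆ - PP b ⁅x, y⁆)

/-- `F(x,y,z) = g((∇ₓP)y, z)`. -/
def FP {L : Type*} [LieRing L] [LieAlgebra ℝ L] (b : Module.Basis (Fin 4) ℝ L) (x y z : L) : ℝ :=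
  gP b (nablaPP b x y) z

/-- The curvature tensor `R(x,y,z,w) = −(1/4)g([x,y],[z,w])`. -/
def RTP {L : Type*} [LieRing L] [LieAlgebra ℝ L] (b : Module.Basis (Fin 4) ℝ L) (x y z w : L) : ℝ :=
  -(4⁻¹ : ℝ) * gP b ⁅x, y⁆ ⁅z, w⁆

/-- The Ricci tensor `ρ(y,z) = Σᵢ εᵢ R(Xᵢ,y,z,Xᵢ)`. -/
def ricP {L : Type*} [LieRing L] [LieAlgebra ℝ L] (b : Module.Basis (Fin 4) ℝ L) (y z : L) : ℝ :=
  ∑ i, eps i * RTP b (b i) y z (b i)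

/-- The scalar curvature `τ = Σᵢ εᵢ ρ(Xᵢ,Xᵢ)`. -/
def tauP {L : Type*} [LieRing L] [LieAlgebra ℝ L] (b : Module.Basis (Fin 4) ℝ L) : ℝ :=
  ∑ i, eps i * ricP b (b i) (b i)

/-- The Nijenhuis tensor `N(x,y) = [x,y] + P[Px,y] + P[x,Py] − [Px,Py]`. -/
def NijP {L : Type*} [LieRing L] [LieAlgebra ℝ L] (b : Module.Basis (Fin 4) ℝ L) (x y : L) : L :=
  ⁅x, y⁆ + PP b ⁅PP b x, y⁆ + PP b ⁅x, PP b y⁆ - ⁅PP b x, PP b y⁆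

/-- The square norm `‖N‖² = Σᵢₖ εᵢ εₖ g(N(Xᵢ,Xₖ), N(Xᵢ,Xₖ))`. -/
def normNijP {L : Type*} [LieRing L] [LieAlgebra ℝ L] (b : Module.Basis (Fin 4) ℝ L) : ℝ :=
  ∑ i, ∑ k, eps i * eps k * gP b (NijP b (b i) (b k)) (NijP b (b i) (b k))

/-- The square norm `‖∇P‖² = Σᵢₖ εᵢ εₖ g((∇_{Xᵢ}P)Xₖ, (∇_{Xᵢ}P)Xₖ)`. -/
def normNablaPP {L : Type*} [LieRing L] [LieAlgebra ℝ L] (b : Module.Basis (Fin 4) ℝ L) : ℝ :=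
  ∑ i, ∑ k, eps i * eps k * gP b (nablaPP b (b i) (b k)) (nablaPP b (b i) (b k))

/-- The index triples `(i,j,k)` (0-indexed) of the possibly-nonzero components
`F_ijk` in the pseudo-Riemannian family: the listed components together with their
images under the symmetry `F_ijk = F_ikj`. -/
def nonzeroTriples : List (Fin 4 × Fin 4 × Fin 4) :=
  [(0, 1, 3), (0, 3, 1), (1, 0, 3), (1, 3, 0),
   (1, 0, 2), (1, 2, 0), (0, 1, 2), (0, 2, 1),
   (3, 1, 2), (3, 2, 1), (2, 1, 3), (2, 3, 1),
   (2, 0, 3), (2, 3, 0), (3, 0, 2), (3, 2, 0)]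


/-- Matrix of components of `F` on the basis. -/
def Fmat (l1 l2 l3 l4 : ℝ) (i j k : Fin 4) : ℝ :=
  if i = 0 ∧ j = 1 ∧ k = 3 then l1 else
  if i = 0 ∧ j = 3 ∧ k = 1 then l1 else
  if i = 1 ∧ j = 0 ∧ k = 3 then -l1 else
  if i = 1 ∧ j = 3 ∧ k = 0 then -l1 else
  if i = 1 ∧ j = 0 ∧ k = 2 then l2 else
  if i = 1 ∧ j = 2 ∧ k = 0 then l2 else
  if i = 0 ∧ j = 1 ∧ k = 2 then -l2 else
  if i = 0 ∧ j = 2 ∧ k = 1 then -l2 else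
  if i = 3 ∧ j = 1 ∧ k = 2 then l3 else
  if i = 3 ∧ j = 2 ∧ k = 1 then l3 else
  if i = 2 ∧ j = 1 ∧ k = 3 then -l3 else
  if i = 2 ∧ j = 3 ∧ k = 1 then -l3 else
  if i = 2 ∧ j = 0 ∧ k = 3 then l4 else
  if i = 2 ∧ j = 3 ∧ k = 0 then l4 else
  if i = 3 ∧ j = 0 ∧ k = 2 then -l4 else
  if i = 3 ∧ j = 2 ∧ k = 0 then -l4 else 0

section Aux
variable {L : Type*} [LieRing L] [LieAlgebra ℝ L] (b : Module.Basis (Fin 4) ℝ L)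

lemma gP_add_left (x x' y : L) : gP b (x + x') y = gP b x y + gP b x' y := by
  simp [gP, add_mul, mul_add, Finset.sum_add_distrib]

lemma gP_smul_left (t : ℝ) (x y : L) : gP b (t • x) y = t * gP b x y := by
  simp [gP, Finset.mul_sum, mul_assoc, mul_left_comm]


lemma gP_sub_left (x x' y : L) : gP b (x - x') y = gP b x y - gP b x' y := by
  simp [gP, sub_mul, mul_sub, Finset.sum_sub_distrib]

lemma gP_neg_left (x y : L) : gP b (-x) y = -gP b x y := by
  simp [gP, Finset.sum_neg_distrib]

lemma gP_zero_left (y : L) : gP b (0 : L) y = 0 := by simp [gP]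

lemma gP_add_right (x y y' : L) : gP b x (y + y') = gP b x y + gP b x y' := by
  simp [gP, mul_add, Finset.sum_add_distrib]

lemma gP_smul_right (t : ℝ) (x y : L) : gP b x (t • y) = t * gP b x y := by
  simp [gP, Finset.mul_sum, mul_assoc, mul_left_comm]

lemma nabla_add_left (x x' y : L) :
    nablaPP b (x + x') y = nablaPP b x y + nablaPP b x' y := by
  simp only [nablaPP, add_lie, lie_add, map_add, smul_add, smul_sub]
  abel

lemma nabla_smul_left (t : ℝ) (x y : L) :
    nablaPP b (t • x) y = t • nablaPP b x y := by
  simp only [nablaPP, smul_lie, lie_smul, map_smul, smul_sub]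
  rw [smul_comm t (2⁻¹:ℝ), smul_comm t (2⁻¹:ℝ)]

lemma nabla_add_right (x y y' : L) :
    nablaPP b x (y + y') = nablaPP b x y + nablaPP b x y' := by
  simp only [nablaPP, add_lie, lie_add, map_add, smul_add, smul_sub]
  abel

lemma nabla_smul_right (t : ℝ) (x y : L) :
    nablaPP b x (t • y) = t • nablaPP b x y := by
  simp only [nablaPP, smul_lie, lie_smul, map_smul, smul_sub]
  rw [smul_comm t (2⁻¹:ℝ), smul_comm t (2⁻¹:ℝ)]

lemma FP_lin1 (y z : L) : IsLinearMap ℝ (fun x => FP b x y z) :=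
  ⟨fun a a' => by simp [FP, nabla_add_left, gP_add_left],
   fun t a => by simp [FP, nabla_smul_left, gP_smul_left]⟩

lemma FP_lin2 (x z : L) : IsLinearMap ℝ (fun y => FP b x y z) :=
  ⟨fun a a' => by simp [FP, nabla_add_right, gP_add_left],
   fun t a => by simp [FP, nabla_smul_right, gP_smul_left]⟩

lemma FP_lin3 (x y : L) : IsLinearMap ℝ (fun z => FP b x y z) :=
  ⟨fun a a' => by simp [FP, gP_add_right],
   fun t a => by simp [FP, gP_smul_right]⟩

lemma isLin_add3 {f g h : L → ℝ} (hf : IsLinearMap ℝ f) (hg : IsLinearMap ℝ g)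
    (hh : IsLinearMap ℝ h) : IsLinearMap ℝ (fun v => f v + g v + h v) := by
  constructor
  · intro a a'; simp only [hf.map_add, hg.map_add, hh.map_add]; ring
  · intro t a; simp only [hf.map_smul, hg.map_smul, hh.map_smul, smul_eq_mul]; ring

lemma expand_lin (f : L → ℝ) (hf : IsLinearMap ℝ f) (x : L) :
    f x = ∑ i, b.repr x i * f (b i) := by
  have : f x = (IsLinearMap.mk' f hf) x := rfl
  rw [this]
  conv_lhs => rw [← b.sum_repr x]
  rw [map_sum]
  simp only [map_smul, smul_eq_mul, IsLinearMap.mk'_apply]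

end Aux

set_option maxHeartbeats 1000000 in
lemma Fbasis_lemma {L : Type*} [LieRing L] [LieAlgebra ℝ L] (b : Module.Basis (Fin 4) ℝ L)
    (l1 l2 l3 l4 : ℝ)
    (h12 : ⁅b 0, b 1⁆ = l2 • b 2 - l1 • b 3)
    (h13 : ⁅b 0, b 2⁆ = l2 • b 1 + l4 • b 3)
    (h14 : ⁅b 0, b 3⁆ = -(l1 • b 1) - l4 • b 2)
    (h23 : ⁅b 1, b 2⁆ = -(l2 • b 0) - l3 • b 3)
    (h24 : ⁅b 1, b 3⁆ = l1 • b 0 + l3 • b 2)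
    (h34 : ⁅b 2, b 3⁆ = -(l4 • b 0) + l3 • b 1) :
    ∀ i j k, FP b (b i) (b j) (b k) = Fmat l1 l2 l3 l4 i j k := by
  have h10 : ⁅b 1, b 0⁆ = -(l2 • b 2 - l1 • b 3) := by rw [← lie_skew, h12]
  have h20 : ⁅b 2, b 0⁆ = -(l2 • b 1 + l4 • b 3) := by rw [← lie_skew, h13]
  have h30 : ⁅b 3, b 0⁆ = -(-(l1 • b 1) - l4 • b 2) := by rw [← lie_skew, h14]
  have h32 : ⁅b 2, b 1⁆ = -(-(l2 • b 0) - l3 • b 3) := by rw [← lie_skew, h23]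
  have h42 : ⁅b 3, b 1⁆ = -(l1 • b 0 + l3 • b 2) := by rw [← lie_skew, h24]
  have h43 : ⁅b 3, b 2⁆ = -(-(l4 • b 0) + l3 • b 1) := by rw [← lie_skew, h34]
  have hP0 : PP b (b 0) = b 0 := by
    have := b.constr_basis ℝ ![b 0, b 1, -b 2, -b 3] 0
    simpa [PP] using this
  have hP1 : PP b (b 1) = b 1 := by
    have := b.constr_basis ℝ ![b 0, b 1, -b 2, -b 3] 1
    simpa [PP] using this
  have hP2 : PP b (b 2) = -b 2 := by
    have := b.constr_basis ℝ ![b 0, b 1, -b 2, -b 3] 2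
    simpa [PP] using this
  have hP3 : PP b (b 3) = -b 3 := by
    have := b.constr_basis ℝ ![b 0, b 1, -b 2, -b 3] 3
    simpa [PP] using this
  have gb : ∀ i j : Fin 4, gP b (b i) (b j) = if i = j then eps i else 0 := by
    intro i j
    simp only [gP, Module.Basis.repr_self, Finsupp.single_apply]
    fin_cases i <;> fin_cases j <;> simp [Fin.sum_univ_four, eps]
  have f0 : ∀ (h : (0:ℕ) < 4), (⟨0, h⟩ : Fin 4) = 0 := fun _ => rfl
  have f1 : ∀ (h : (1:ℕ) < 4), (⟨1, h⟩ : Fin 4) = 1 := fun _ => rfl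
  have f2 : ∀ (h : (2:ℕ) < 4), (⟨2, h⟩ : Fin 4) = 2 := fun _ => rfl
  have f3 : ∀ (h : (3:ℕ) < 4), (⟨3, h⟩ : Fin 4) = 3 := fun _ => rfl
  intro i j k
  fin_cases i <;> fin_cases j <;> fin_cases k <;>
  · simp only [f0, f1, f2, f3, FP, nablaPP, hP0, hP1, hP2, hP3, h12, h13, h14, h23, h24, h34,
      h10, h20, h30, h32, h42, h43, lie_self, lie_neg, neg_neg,
      map_add, map_sub, map_neg, map_smul, map_zero, smul_zero, sub_zero, zero_sub,
      smul_neg, smul_add, smul_sub, gP_smul_left, gP_add_left, gP_sub_left,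
      gP_neg_left, gP_zero_left, gb, Fin.reduceEq, reduceIte]
    simp [Fmat, eps]
    try norm_num
    try ring

set_option maxHeartbeats 1000000 in
lemma Fmat_cyclic (l1 l2 l3 l4 : ℝ) : ∀ i j k : Fin 4,
    Fmat l1 l2 l3 l4 i j k + Fmat l1 l2 l3 l4 j k i + Fmat l1 l2 l3 l4 k i j = 0 := by
  have f0 : ∀ (h : (0:ℕ) < 4), (⟨0, h⟩ : Fin 4) = 0 := fun _ => rfl
  have f1 : ∀ (h : (1:ℕ) < 4), (⟨1, h⟩ : Fin 4) = 1 := fun _ => rfl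
  have f2 : ∀ (h : (2:ℕ) < 4), (⟨2, h⟩ : Fin 4) = 2 := fun _ => rfl
  have f3 : ∀ (h : (3:ℕ) < 4), (⟨3, h⟩ : Fin 4) = 3 := fun _ => rfl
  intro i j k
  fin_cases i <;> fin_cases j <;> fin_cases k <;> simp [f0, f1, f2, f3, Fmat] <;> try ring

set_option maxHeartbeats 1000000 in
lemma Fmat_symm (l1 l2 l3 l4 : ℝ) : ∀ i j k : Fin 4,
    Fmat l1 l2 l3 l4 i j k = Fmat l1 l2 l3 l4 i k j := by
  have f0 : ∀ (h : (0:ℕ) < 4), (⟨0, h⟩ : Fin 4) = 0 := fun _ => rfl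
  have f1 : ∀ (h : (1:ℕ) < 4), (⟨1, h⟩ : Fin 4) = 1 := fun _ => rfl
  have f2 : ∀ (h : (2:ℕ) < 4), (⟨2, h⟩ : Fin 4) = 2 := fun _ => rfl
  have f3 : ∀ (h : (3:ℕ) < 4), (⟨3, h⟩ : Fin 4) = 3 := fun _ => rfl
  intro i j k
  fin_cases i <;> fin_cases j <;> fin_cases k <;> simp [f0, f1, f2, f3, Fmat]

set_option maxHeartbeats 1000000 in
lemma Fmat_zero (l1 l2 l3 l4 : ℝ) : ∀ i j k : Fin 4, (i, j, k) ∉ nonzeroTriples →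
    Fmat l1 l2 l3 l4 i j k = 0 := by
  have f0 : ∀ (h : (0:ℕ) < 4), (⟨0, h⟩ : Fin 4) = 0 := fun _ => rfl
  have f1 : ∀ (h : (1:ℕ) < 4), (⟨1, h⟩ : Fin 4) = 1 := fun _ => rfl
  have f2 : ∀ (h : (2:ℕ) < 4), (⟨2, h⟩ : Fin 4) = 2 := fun _ => rfl
  have f3 : ∀ (h : (3:ℕ) < 4), (⟨3, h⟩ : Fin 4) = 3 := fun _ => rfl
  intro i j k h
  fin_cases i <;> fin_cases j <;> fin_cases k <;>
    first
      | exact absurd (by decide) h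
      | simp [f0, f1, f2, f3, Fmat]

/-- Components (4.4) of `F` in the pseudo-Riemannian family:
`F₁₂₄ = −F₂₁₄ = λ₁`, `F₂₁₃ = −F₁₂₃ = λ₂`, `F₄₂₃ = −F₃₂₄ = λ₃`, `F₃₁₄ = −F₄₁₃ = λ₄`,
all other components are determined by the symmetry `F_ijk = F_ikj` or are zero;
moreover `F` satisfies the cyclic identity, i.e. the manifold is in the class `𝒲₃`. -/
theorem F_components_pseudoRiemannian
    (L : Type*) [LieRing L] [LieAlgebra ℝ L] (b : Module.Basis (Fin 4) ℝ L)
    (l1 l2 l3 l4 : ℝ)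
    (h12 : ⁅b 0, b 1⁆ = l2 • b 2 - l1 • b 3)
    (h13 : ⁅b 0, b 2⁆ = l2 • b 1 + l4 • b 3)
    (h14 : ⁅b 0, b 3⁆ = -(l1 • b 1) - l4 • b 2)
    (h23 : ⁅b 1, b 2⁆ = -(l2 • b 0) - l3 • b 3)
    (h24 : ⁅b 1, b 3⁆ = l1 • b 0 + l3 • b 2)
    (h34 : ⁅b 2, b 3⁆ = -(l4 • b 0) + l3 • b 1)
    : FP b (b 0) (b 1) (b 3) = l1 ∧ FP b (b 1) (b 0) (b 3) = -l1 ∧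
      FP b (b 1) (b 0) (b 2) = l2 ∧ FP b (b 0) (b 1) (b 2) = -l2 ∧
      FP b (b 3) (b 1) (b 2) = l3 ∧ FP b (b 2) (b 1) (b 3) = -l3 ∧
      FP b (b 2) (b 0) (b 3) = l4 ∧ FP b (b 3) (b 0) (b 2) = -l4 ∧
      (∀ i j k : Fin 4, FP b (b i) (b j) (b k) = FP b (b i) (b k) (b j)) ∧
      (∀ i j k : Fin 4, (i, j, k) ∉ nonzeroTriples → FP b (b i) (b j) (b k) = 0) ∧
      (∀ x y z : L, FP b x y z + FP b y z x + FP b z x y = 0) := by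
  have Fbasis := Fbasis_lemma b l1 l2 l3 l4 h12 h13 h14 h23 h24 h34
  have key : ∀ i j k : Fin 4, FP b (b i) (b j) (b k) + FP b (b j) (b k) (b i)
      + FP b (b k) (b i) (b j) = 0 := by
    intro i j k
    rw [Fbasis, Fbasis, Fbasis]
    exact Fmat_cyclic l1 l2 l3 l4 i j k
  refine ⟨?_, ?_, ?_, ?_, ?_, ?_, ?_, ?_, ?_, ?_, ?_⟩
  · rw [Fbasis]; simp [Fmat]
  · rw [Fbasis]; simp [Fmat]
  · rw [Fbasis]; simp [Fmat]
  · rw [Fbasis]; simp [Fmat]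
  · rw [Fbasis]; simp [Fmat]
  · rw [Fbasis]; simp [Fmat]
  · rw [Fbasis]; simp [Fmat]
  · rw [Fbasis]; simp [Fmat]
  · intro i j k
    rw [Fbasis, Fbasis]
    exact Fmat_symm l1 l2 l3 l4 i j k
  · intro i j k h
    rw [Fbasis]
    exact Fmat_zero l1 l2 l3 l4 i j k h
  · intro x y z
    rw [show FP b x y z + FP b y z x + FP b z x y
        = ∑ i, b.repr x i * (FP b (b i) y z + FP b y z (b i) + FP b z (b i) y) from
      expand_lin b _ (isLin_add3 (FP_lin1 b y z) (FP_lin3 b y z) (FP_lin2 b z y)) x]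
    refine Finset.sum_eq_zero fun i _ => ?_
    rw [show FP b (b i) y z + FP b y z (b i) + FP b z (b i) y
        = ∑ j, b.repr y j * (FP b (b i) (b j) z + FP b (b j) z (b i) + FP b z (b i) (b j)) from
      expand_lin b _ (isLin_add3 (FP_lin2 b (b i) z) (FP_lin1 b z (b i)) (FP_lin3 b z (b i))) y]
    refine mul_eq_zero_of_right _ (Finset.sum_eq_zero fun j _ => ?_)
    rw [show FP b (b i) (b j) z + FP b (b j) z (b i) + FP b z (b i) (b j)
        = ∑ k, b.repr z k * (FP b (b i) (b j) (b k) + FP b (b j) (b k) (b i) + FP b (b k) (b i) (b j)) from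
      expand_lin b _ (isLin_add3 (FP_lin3 b (b i) (b j)) (FP_lin2 b (b j) (b i)) (FP_lin1 b (b i) (b j))) z]
    refine mul_eq_zero_of_right _ (Finset.sum_eq_zero fun k _ => ?_)
    rw [key i j k, mul_zero]
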